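/- For the random walk on the half-line, suppose in addition that Z ≥ −z₀ almost surely for some z₀ > 0 and that 𝔼[(Z^+)²] < ∞. Set V(x) = (x+1)². Then for every β ∈ (0, 1/4) there exist d' ≥ 1 and b' < ∞ such that, with the taming function F(z) = ⌈z^{1/2}/μ⌉ for z > d' and F(z) = 1 for z ≤ d', one has 𝔼_x[V(X_{F(V(x))})] ≤ β·V(x) + b'·1_{[V(x) ≤ d']} for all x ≥ 0. -/

import Mathlib

open MeasureTheory ProbabilityTheory ENNReal Finset

/-- The random walk on the half-line `X_{n+1} = (X_n + Z_{n+1})⁺` started at `x`. -/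
noncomputable def walk {Ω : Type*} (Z : ℕ → Ω → ℝ) (x : ℝ) : ℕ → Ω → ℝ
  | 0 => fun _ => x
  | n + 1 => fun ω => max (walk Z x n ω + Z (n + 1) ω) 0

/-- First return time of the walk to the atom `0`: `τ_0 = inf{n ≥ 1 : X_n = 0}`. -/
noncomputable def hitZeroTime {Ω : Type*} (Z : ℕ → Ω → ℝ) (x : ℝ) (ω : Ω) : ℕ∞ :=
  ⨅ (n : ℕ) (_ : 1 ≤ n ∧ walk Z x n ω = 0), (n : ℕ∞)

section Aux
variable {Ω : Type*} {Z : ℕ → Ω → ℝ} {x : ℝ}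

lemma walk_succ (n : ℕ) (ω : Ω) :
    walk Z x (n + 1) ω = max (walk Z x n ω + Z (n + 1) ω) 0 := rfl

lemma walk_zero (ω : Ω) : walk Z x 0 ω = x := rfl

lemma walk_nonneg (hx : 0 ≤ x) : ∀ n ω, 0 ≤ walk Z x n ω
  | 0, _ => hx
  | _ + 1, _ => le_max_right _ _

lemma walk_measurable [MeasurableSpace Ω] (hZ : ∀ n, Measurable (Z n)) :
    ∀ n, Measurable (walk Z x n)
  | 0 => measurable_const
  | n + 1 => ((walk_measurable hZ n).add (hZ (n + 1))).max measurable_const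

/-- domination by positive parts -/
lemma walk_le_sumpos (hx : 0 ≤ x) : ∀ n ω,
    walk Z x n ω ≤ x + ∑ i ∈ range n, max (Z (i + 1) ω) 0
  | 0, ω => by simp [walk_zero]
  | n + 1, ω => by
    have ih := walk_le_sumpos hx n ω
    have hP : 0 ≤ ∑ i ∈ range n, max (Z (i + 1) ω) 0 :=
      Finset.sum_nonneg fun i _ => le_max_right _ _
    rw [walk_succ, Finset.sum_range_succ]
    have h1 : Z (n + 1) ω ≤ max (Z (n + 1) ω) 0 := le_max_left _ _
    have h2 : (0:ℝ) ≤ max (Z (n + 1) ω) 0 := le_max_right _ _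
    apply max_le <;> linarith

/-- domination by max of free walk and walk from zero -/
lemma walk_le_max_free (hx : 0 ≤ x) : ∀ n ω,
    walk Z x n ω ≤ max (max (x + ∑ i ∈ range n, Z (i + 1) ω) 0) (walk Z 0 n ω)
  | 0, ω => le_max_of_le_left (le_max_of_le_left (by simp [walk_zero]))
  | n + 1, ω => by
    have ih := walk_le_max_free hx n ω
    have hb : 0 ≤ walk Z 0 n ω := walk_nonneg le_rfl n ω
    rw [walk_succ, walk_succ]
    set a := x + ∑ i ∈ range n, Z (i + 1) ω with ha
    set b := walk Z 0 n ω
    set z := Z (n + 1) ω with hzd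
    set W := walk Z x n ω
    have hsum : x + ∑ i ∈ range (n + 1), Z (i + 1) ω = a + z := by
      rw [Finset.sum_range_succ, ha, hzd]; ring
    rw [hsum]
    apply max_le
    · rw [le_max_iff, le_max_iff] at ih ⊢
      rcases ih with (h | h) | h
      · exact Or.inl (Or.inl (show W + z ≤ a + z by linarith))
      · exact Or.inr (le_max_of_le_left (show W + z ≤ b + z by linarith))
      · exact Or.inr (le_max_of_le_left (show W + z ≤ b + z by linarith))
    · exact le_max_of_le_right (le_max_right _ _)

end Aux

/-- the walk from 0 as a function of the increments -/
noncomputable def walkFn : ℕ → (ℕ → ℝ) → ℝ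
  | 0, _ => 0
  | k + 1, z => max (walkFn k z + z (k + 1)) 0

lemma walkFn_eq {Ω : Type*} (Z : ℕ → Ω → ℝ) (ω : Ω) :
    ∀ k, walk Z 0 k ω = walkFn k (fun n => Z n ω)
  | 0 => rfl
  | k + 1 => by rw [walk_succ, walkFn, walkFn_eq Z ω k]

lemma walkFn_measurable : ∀ k, Measurable (walkFn k)
  | 0 => measurable_const
  | k + 1 =>
    ((walkFn_measurable k).add (measurable_pi_apply (k + 1))).max measurable_const

lemma walkFn_congr : ∀ k, ∀ z z' : ℕ → ℝ, (∀ i, i ≤ k → z i = z' i) →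
    walkFn k z = walkFn k z'
  | 0, _, _, _ => rfl
  | k + 1, z, z', h => by
    rw [walkFn, walkFn, walkFn_congr k z z' (fun i hi => h i (Nat.le_succ_of_le hi)),
      h (k + 1) le_rfl]

section Indep
variable {Ω : Type*} [MeasurableSpace Ω] {Pr : Measure Ω} {Z : ℕ → Ω → ℝ}

lemma indep_comp
    (hindep : iIndepFun Z Pr)
    (hZ : ∀ n, Measurable (Z n)) (k : ℕ) (φ : (ℕ → ℝ) → ℝ) (hφ : Measurable φ)
    (hdep : ∀ z z' : ℕ → ℝ, (∀ i, i ≤ k → z i = z' i) → φ z = φ z') :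
    IndepFun (fun ω => φ (fun n => Z n ω)) (Z (k + 1)) Pr := by
  classical
  have hdisj : Disjoint (Finset.range (k + 1)) ({k + 1} : Finset ℕ) := by simp
  have h := hindep.indepFun_finset (Finset.range (k + 1)) {k + 1} hdisj hZ
  let e : ((i : (Finset.range (k + 1) : Finset ℕ)) → ℝ) → (ℕ → ℝ) := fun g n =>
    if hn : n ∈ Finset.range (k + 1) then g ⟨n, hn⟩ else 0
  have he : Measurable e := by
    apply measurable_pi_lambda
    intro n
    by_cases hn : n ∈ Finset.range (k + 1)
    · simp only [e, dif_pos hn]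
      exact measurable_pi_apply _
    · simp only [e, dif_neg hn]
      exact measurable_const
  have hmem : (k + 1) ∈ ({k + 1} : Finset ℕ) := by simp
  have hψ : Measurable (fun g : ((i : ({k + 1} : Finset ℕ)) → ℝ) => g ⟨k + 1, hmem⟩) :=
    measurable_pi_apply _
  have h2 := h.comp (hφ.comp he) hψ
  have hl : ((φ ∘ e) ∘ fun ω (i : (Finset.range (k + 1) : Finset ℕ)) => Z i ω)
      = fun ω => φ (fun n => Z n ω) := by
    funext ω
    exact hdep _ _ (fun i hi => by
      simp [e, Finset.mem_range, Nat.lt_succ_of_le hi]; exact fun h => absurd h (by omega))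
  have hr : ((fun g : ((i : ({k + 1} : Finset ℕ)) → ℝ) => g ⟨k + 1, hmem⟩) ∘
      fun ω (i : ({k + 1} : Finset ℕ)) => Z i ω) = Z (k + 1) := rfl
  rw [hl, hr] at h2
  exact h2

lemma indep_walk
    (hindep : iIndepFun Z Pr)
    (hZ : ∀ n, Measurable (Z n)) (k : ℕ) :
    IndepFun (walk Z 0 k) (Z (k + 1)) Pr := by
  have h := indep_comp hindep hZ k (walkFn k) (walkFn_measurable k)
    (fun z z' hz => walkFn_congr k z z' hz)
  have : (fun ω => walkFn k (fun n => Z n ω)) = walk Z 0 k := by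
    funext ω; exact (walkFn_eq Z ω k).symm
  rwa [this] at h

lemma indep_sumT (μm : ℝ)
    (hindep : iIndepFun Z Pr)
    (hZ : ∀ n, Measurable (Z n)) (k : ℕ) :
    IndepFun (fun ω => ∑ i ∈ range k, (Z (i + 1) ω + μm)) (Z (k + 1)) Pr := by
  have h := indep_comp hindep hZ k (fun z => ∑ i ∈ range k, (z (i + 1) + μm))
    (Finset.measurable_sum _ fun i _ => (measurable_pi_apply (i + 1)).add measurable_const)
    (fun z z' hz => Finset.sum_congr rfl fun i hi => by
      rw [hz (i + 1) (Nat.succ_le_of_lt (Finset.mem_range.1 hi))])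
  exact h

end Indep

set_option maxHeartbeats 2000000 in
/-- for the random walk on the half-line driven by i.i.d. increments `Z`
with `𝔼[Z] = −μ < 0`, `Z ≥ −z₀` a.s. and `𝔼[(Z⁺)²] < ∞`, with `V(x) = (x+1)²`: for every
`β ∈ (0, 1/4)` there exist `d' ≥ 1` and `b' < ∞` such that, with the taming function
`F(z) = ⌈z^{1/2}/μ⌉` for `z > d'` and `F(z) = 1` for `z ≤ d'`, one has
`𝔼_x[V(X_{F(V(x))})] ≤ β·V(x) + b'·1_{[V(x) ≤ d']}` for all `x ≥ 0`. -/
theorem stmt_17 {Ω : Type*} [MeasurableSpace Ω]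
    (Pr : Measure Ω) [IsProbabilityMeasure Pr]
    (Z : ℕ → Ω → ℝ) (hZmeas : ∀ n, Measurable (Z n))
    (hindep : ProbabilityTheory.iIndepFun Z Pr)
    (hident : ∀ n, ProbabilityTheory.IdentDistrib (Z n) (Z 0) Pr Pr)
    (hint : Integrable (Z 0) Pr)
    (μm : ℝ) (hmean : ∫ ω, Z 0 ω ∂Pr = -μm) (hμm : 0 < μm)
    (z₀ : ℝ) (hz₀ : 0 < z₀) (hbdd : ∀ n, ∀ᵐ ω ∂Pr, -z₀ ≤ Z n ω)
    (hsq : Integrable (fun ω => (max (Z 0 ω) 0) ^ 2) Pr) :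
    ∀ β : ℝ, 0 < β → β < 1 / 4 →
      ∃ d' : ℝ, 1 ≤ d' ∧ ∃ b' : ℝ,
        ∀ x : ℝ, 0 ≤ x →
          ∫⁻ ω, ENNReal.ofReal
              ((walk Z x
                  (if (x + 1) ^ 2 ≤ d' then 1 else ⌈Real.sqrt ((x + 1) ^ 2) / μm⌉₊) ω
                + 1) ^ 2) ∂Pr
            ≤ ENNReal.ofReal (β * (x + 1) ^ 2
                + (if (x + 1) ^ 2 ≤ d' then b' else 0)) := by
  intro β hβ0 hβ
  -- basic integrability facts
  have hmaxsq : ∀ n, Integrable (fun ω => (max (Z n ω) 0) ^ 2) Pr := fun n =>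
    ((hident n).comp ((measurable_id.max measurable_const).pow_const 2)).integrable_iff.2 hsq
  have hZsq : ∀ n, Integrable (fun ω => Z n ω ^ 2) Pr := by
    intro n
    apply Integrable.mono' ((hmaxsq n).add (integrable_const (z₀ ^ 2)))
      ((hZmeas n).pow_const 2).aestronglyMeasurable
    filter_upwards [hbdd n] with ω h
    rw [Real.norm_eq_abs, abs_of_nonneg (sq_nonneg _)]
    show Z n ω ^ 2 ≤ (max (Z n ω) 0) ^ 2 + z₀ ^ 2
    rcases le_total (Z n ω) 0 with h2 | h2
    · rw [max_eq_right h2]; nlinarith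
    · rw [max_eq_left h2]; nlinarith
  have hZL2 : ∀ n, MemLp (Z n) 2 Pr := fun n =>
    (memLp_two_iff_integrable_sq (hZmeas n).aestronglyMeasurable).2 (hZsq n)
  have hZint : ∀ n, Integrable (Z n) Pr := fun n => (hident n).integrable_iff.2 hint
  have hEZ : ∀ n, ∫ ω, Z n ω ∂Pr = -μm := fun n => (hident n).integral_eq.trans hmean
  have hEZsq : ∀ n, ∫ ω, Z n ω ^ 2 ∂Pr = ∫ ω, Z 0 ω ^ 2 ∂Pr := fun n =>
    ((hident n).comp (measurable_id.pow_const 2)).integral_eq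
  have hEmaxsq : ∀ n, ∫ ω, (max (Z n ω) 0) ^ 2 ∂Pr = ∫ ω, (max (Z 0 ω) 0) ^ 2 ∂Pr := fun n =>
    ((hident n).comp ((measurable_id.max measurable_const).pow_const 2)).integral_eq
  have hmaxL2 : ∀ n, MemLp (fun ω => max (Z n ω) 0) 2 Pr := fun n =>
    (memLp_two_iff_integrable_sq ((hZmeas n).max measurable_const).aestronglyMeasurable).2
      (hmaxsq n)
  have hPL2 : ∀ k, MemLp (fun ω => ∑ i ∈ range k, max (Z (i + 1) ω) 0) 2 Pr := fun k =>
    memLp_finsetSum (range k) fun i _ => hmaxL2 (i + 1)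
  -- integrability of the walk functionals
  have hWsqInt : ∀ y : ℝ, 0 ≤ y → ∀ k, Integrable (fun ω => (walk Z y k ω + 1) ^ 2) Pr := by
    intro y hy k
    have hP2 : MemLp (fun ω => (y + 1) + ∑ i ∈ range k, max (Z (i + 1) ω) 0) 2 Pr :=
      (memLp_const (y + 1)).add (hPL2 k)
    apply Integrable.mono' hP2.integrable_sq
      (((walk_measurable hZmeas k).add measurable_const).pow_const 2).aestronglyMeasurable
    apply ae_of_all
    intro ω
    have h1 := walk_le_sumpos (Z := Z) hy k ω
    have h0 := walk_nonneg (Z := Z) hy k ω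
    have hPnn : 0 ≤ ∑ i ∈ range k, max (Z (i + 1) ω) 0 :=
      Finset.sum_nonneg fun i _ => le_max_right _ _
    simp only [Pi.add_apply]
    rw [Real.norm_eq_abs, abs_of_nonneg (sq_nonneg _)]
    nlinarith
  have hWaddInt : ∀ y : ℝ, 0 ≤ y → ∀ k, Integrable (fun ω => walk Z y k ω + 1) Pr := by
    intro y hy k
    have hP : Integrable (fun ω => (y + 1) + ∑ i ∈ range k, max (Z (i + 1) ω) 0) Pr :=
      (integrable_const (y + 1)).add ((hPL2 k).integrable one_le_two)
    apply Integrable.mono' hP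
      ((walk_measurable hZmeas k).add measurable_const).aestronglyMeasurable
    apply ae_of_all
    intro ω
    have h1 := walk_le_sumpos (Z := Z) hy k ω
    have h0 := walk_nonneg (Z := Z) hy k ω
    simp only [Pi.add_apply]
    rw [Real.norm_eq_abs, abs_of_nonneg (by linarith)]
    linarith
  -- the drift recursion for the walk from 0
  have e_rec : ∀ k, ∫ ω, (walk Z 0 (k + 1) ω + 1) ^ 2 ∂Pr
      ≤ ∫ ω, (walk Z 0 k ω + 1) ^ 2 ∂Pr + (∫ ω, Z 0 ω ^ 2 ∂Pr + 1) := by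
    intro k
    have hW1 : Integrable (fun ω => walk Z 0 k ω + 1) Pr := hWaddInt 0 le_rfl k
    have hWsqk : Integrable (fun ω => (walk Z 0 k ω + 1) ^ 2) Pr := hWsqInt 0 le_rfl k
    have hind : IndepFun (fun ω => walk Z 0 k ω + 1) (Z (k + 1)) Pr :=
      (indep_walk hindep hZmeas k).comp (measurable_add_const 1) measurable_id
    have hmul : Integrable (fun ω => (walk Z 0 k ω + 1) * Z (k + 1) ω) Pr :=
      hind.integrable_mul hW1 (hZint (k + 1))
    have hRHSint : Integrable (fun ω => (walk Z 0 k ω + 1) ^ 2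
        + (2 * ((walk Z 0 k ω + 1) * Z (k + 1) ω) + (Z (k + 1) ω ^ 2 + 1))) Pr :=
      hWsqk.add ((hmul.const_mul 2).add ((hZsq (k + 1)).add (integrable_const 1)))
    have h1 : ∫ ω, (walk Z 0 (k + 1) ω + 1) ^ 2 ∂Pr
        ≤ ∫ ω, ((walk Z 0 k ω + 1) ^ 2
          + (2 * ((walk Z 0 k ω + 1) * Z (k + 1) ω) + (Z (k + 1) ω ^ 2 + 1))) ∂Pr := by
      apply integral_mono_of_nonneg (ae_of_all _ fun ω => sq_nonneg _) hRHSint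
      apply ae_of_all
      intro ω
      dsimp only
      rw [walk_succ]
      set a := walk Z 0 k ω
      set z := Z (k + 1) ω
      rcases le_total (a + z) 0 with h | h
      · rw [max_eq_right h]; nlinarith [sq_nonneg (a + z + 1)]
      · rw [max_eq_left h]; nlinarith
    have h2 : ∫ ω, ((walk Z 0 k ω + 1) ^ 2
          + (2 * ((walk Z 0 k ω + 1) * Z (k + 1) ω) + (Z (k + 1) ω ^ 2 + 1))) ∂Pr
        = ∫ ω, (walk Z 0 k ω + 1) ^ 2 ∂Pr
          + (2 * ∫ ω, (walk Z 0 k ω + 1) * Z (k + 1) ω ∂Pr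
            + (∫ ω, Z (k + 1) ω ^ 2 ∂Pr + 1)) := by
      have hB3 : Integrable (fun ω => Z (k + 1) ω ^ 2 + 1) Pr :=
        (hZsq (k + 1)).add (integrable_const 1)
      have hB2 : Integrable (fun ω => 2 * ((walk Z 0 k ω + 1) * Z (k + 1) ω)
          + (Z (k + 1) ω ^ 2 + 1)) Pr := (hmul.const_mul 2).add hB3
      rw [integral_add hWsqk hB2, integral_add (hmul.const_mul 2) hB3,
        integral_add (hZsq (k + 1)) (integrable_const 1), integral_const_mul, integral_const]
      simp
    have h3 : ∫ ω, (walk Z 0 k ω + 1) * Z (k + 1) ω ∂Pr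
        = (∫ ω, (walk Z 0 k ω + 1) ∂Pr) * (-μm) := by
      have h := hind.integral_fun_mul_eq_mul_integral hW1.1 (hZint (k + 1)).1
      rw [hEZ (k + 1)] at h
      exact h
    have h4 : 0 ≤ ∫ ω, (walk Z 0 k ω + 1) ∂Pr :=
      integral_nonneg fun ω => by
        simp only [Pi.zero_apply]
        linarith [walk_nonneg (Z := Z) (le_refl (0:ℝ)) k ω]
    have h5 : (∫ ω, (walk Z 0 k ω + 1) ∂Pr) * (-μm) ≤ 0 := by nlinarith
    rw [h2, h3, hEZsq (k + 1)] at h1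
    linarith
  have e_bound : ∀ k, ∫ ω, (walk Z 0 k ω + 1) ^ 2 ∂Pr
      ≤ 1 + k * (∫ ω, Z 0 ω ^ 2 ∂Pr + 1) := by
    intro k
    induction k with
    | zero => simp [walk_zero]
    | succ k ih =>
      have := e_rec k
      have hc : (0:ℝ) ≤ ∫ ω, Z 0 ω ^ 2 ∂Pr := integral_nonneg fun ω => sq_nonneg _
      push_cast
      push_cast at ih
      nlinarith
  -- second moment of the centered free walk
  set v := ∫ ω, (Z 0 ω + μm) ^ 2 ∂Pr with hvdef
  have hv0 : 0 ≤ v := integral_nonneg fun ω => sq_nonneg _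
  have hTL2 : ∀ k, MemLp (fun ω => ∑ i ∈ range k, (Z (i + 1) ω + μm)) 2 Pr := fun k =>
    memLp_finsetSum (range k) fun i _ => (hZL2 (i + 1)).add (memLp_const μm)
  have hTsqInt : ∀ k, Integrable (fun ω => (∑ i ∈ range k, (Z (i + 1) ω + μm)) ^ 2) Pr :=
    fun k => (hTL2 k).integrable_sq
  have hTint : ∀ k, Integrable (fun ω => ∑ i ∈ range k, (Z (i + 1) ω + μm)) Pr := fun k =>
    (hTL2 k).integrable one_le_two
  have hYsq : ∀ k, Integrable (fun ω => (Z k ω + μm) ^ 2) Pr := fun k =>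
    ((hZL2 k).add (memLp_const μm)).integrable_sq
  have hEY : ∀ k, ∫ ω, (Z k ω + μm) ∂Pr = 0 := by
    intro k
    rw [integral_add (hZint k) (integrable_const μm), hEZ k, integral_const]
    simp
  have hEYsq : ∀ k, ∫ ω, (Z k ω + μm) ^ 2 ∂Pr = v := fun k =>
    ((hident k).comp ((measurable_add_const μm).pow_const 2)).integral_eq
  have T_bound : ∀ n : ℕ, ∫ ω, (∑ i ∈ range n, (Z (i + 1) ω + μm)) ^ 2 ∂Pr ≤ n * v := by
    intro n
    induction n with
    | zero => simp
    | succ k ih =>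
      have hindT : IndepFun (fun ω => ∑ i ∈ range k, (Z (i + 1) ω + μm))
          (fun ω => Z (k + 1) ω + μm) Pr :=
        (indep_sumT μm hindep hZmeas k).comp measurable_id (measurable_add_const μm)
      have hYint : Integrable (fun ω => Z (k + 1) ω + μm) Pr :=
        (hZint (k + 1)).add (integrable_const μm)
      have hmulT : Integrable
          (fun ω => (∑ i ∈ range k, (Z (i + 1) ω + μm)) * (Z (k + 1) ω + μm)) Pr :=
        hindT.integrable_mul (hTint k) hYint
      have hexp : ∫ ω, (∑ i ∈ range (k + 1), (Z (i + 1) ω + μm)) ^ 2 ∂Pr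
          = ∫ ω, (∑ i ∈ range k, (Z (i + 1) ω + μm)) ^ 2 ∂Pr
            + (2 * ∫ ω, (∑ i ∈ range k, (Z (i + 1) ω + μm)) * (Z (k + 1) ω + μm) ∂Pr
              + ∫ ω, (Z (k + 1) ω + μm) ^ 2 ∂Pr) := by
        have hptw : (fun ω => (∑ i ∈ range (k + 1), (Z (i + 1) ω + μm)) ^ 2)
            = fun ω => (∑ i ∈ range k, (Z (i + 1) ω + μm)) ^ 2
              + (2 * ((∑ i ∈ range k, (Z (i + 1) ω + μm)) * (Z (k + 1) ω + μm))
                + (Z (k + 1) ω + μm) ^ 2) := by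
          funext ω
          rw [Finset.sum_range_succ]
          ring
        have hB : Integrable (fun ω =>
            2 * ((∑ i ∈ range k, (Z (i + 1) ω + μm)) * (Z (k + 1) ω + μm))
              + (Z (k + 1) ω + μm) ^ 2) Pr := (hmulT.const_mul 2).add (hYsq (k + 1))
        rw [hptw, integral_add (hTsqInt k) hB,
          integral_add (hmulT.const_mul 2) (hYsq (k + 1)), integral_const_mul]
      have hcross : ∫ ω, (∑ i ∈ range k, (Z (i + 1) ω + μm)) * (Z (k + 1) ω + μm) ∂Pr = 0 := by
        have h := hindT.integral_fun_mul_eq_mul_integral (hTint k).1 hYint.1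
        rw [hEY (k + 1), mul_zero] at h
        exact h
      rw [hexp, hcross, hEYsq (k + 1)]
      push_cast
      linarith
  -- the constants
  set c := ∫ ω, Z 0 ω ^ 2 ∂Pr + 1 with hcdef
  have hc1 : (1:ℝ) ≤ c := by
    have : (0:ℝ) ≤ ∫ ω, Z 0 ω ^ 2 ∂Pr := integral_nonneg fun ω => sq_nonneg _
    rw [hcdef]; linarith
  set A := 2 * v + c with hAdef
  have hA1 : (1:ℝ) ≤ A := by rw [hAdef]; linarith
  set K := A / μm + A + 3 with hKdef
  have hK1 : (1:ℝ) ≤ K := by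
    have : (0:ℝ) ≤ A / μm := by positivity
    rw [hKdef]; linarith
  refine ⟨max 1 ((K / β) ^ 2), le_max_left _ _,
    2 * max 1 ((K / β) ^ 2) + 2 * ∫ ω, (max (Z 0 ω) 0) ^ 2 ∂Pr, ?_⟩
  intro x hx
  have hx1 : (0:ℝ) ≤ x + 1 := by linarith
  have hsqrt : Real.sqrt ((x + 1) ^ 2) = x + 1 := Real.sqrt_sq hx1
  by_cases hcase : (x + 1) ^ 2 ≤ max 1 ((K / β) ^ 2)
  · -- small case : one step
    simp only [if_pos hcase]
    have hInt := hWsqInt x hx 1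
    rw [← ofReal_integral_eq_lintegral_ofReal hInt (ae_of_all _ fun ω => sq_nonneg _)]
    apply ENNReal.ofReal_le_ofReal
    have hBint : Integrable (fun ω => 2 * (x + 1) ^ 2 + 2 * (max (Z 1 ω) 0) ^ 2) Pr :=
      (integrable_const (2 * (x + 1) ^ 2)).add ((hmaxsq 1).const_mul 2)
    have hbnd : ∫ ω, (walk Z x 1 ω + 1) ^ 2 ∂Pr
        ≤ ∫ ω, (2 * (x + 1) ^ 2 + 2 * (max (Z 1 ω) 0) ^ 2) ∂Pr := by
      apply integral_mono_of_nonneg (ae_of_all _ fun ω => sq_nonneg _) hBint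
      apply ae_of_all
      intro ω
      have hw1 : walk Z x 1 ω = max (x + Z 1 ω) 0 := rfl
      dsimp only
      rw [hw1]
      have h2 : Z 1 ω ≤ max (Z 1 ω) 0 := le_max_left _ _
      have h3 : (0:ℝ) ≤ max (Z 1 ω) 0 := le_max_right _ _
      rcases le_total (x + Z 1 ω) 0 with h | h
      · rw [max_eq_right h]; nlinarith
      · rw [max_eq_left h]
        nlinarith [sq_nonneg (x + 1 - (Z 1 ω ⊔ 0)),
          mul_nonneg (sub_nonneg.2 h2) (show (0:ℝ) ≤ 2 * x + Z 1 ω + (Z 1 ω ⊔ 0) + 2 by linarith)]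
    have heq : ∫ ω, (2 * (x + 1) ^ 2 + 2 * (max (Z 1 ω) 0) ^ 2) ∂Pr
        = 2 * (x + 1) ^ 2 + 2 * ∫ ω, (max (Z 0 ω) 0) ^ 2 ∂Pr := by
      rw [integral_add (integrable_const _) ((hmaxsq 1).const_mul 2), integral_const,
        integral_const_mul, hEmaxsq 1]
      simp
    rw [heq] at hbnd
    have hβnn : 0 ≤ β * (x + 1) ^ 2 := by positivity
    linarith
  · -- large case
    simp only [if_neg hcase]
    rw [hsqrt]
    obtain ⟨n, hn⟩ : ∃ n : ℕ, ⌈(x + 1) / μm⌉₊ = n := ⟨_, rfl⟩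
    rw [hn]
    have hxn : x + 1 ≤ (n:ℝ) * μm := by
      have h := Nat.le_ceil ((x + 1) / μm)
      rw [hn, div_le_iff₀ hμm] at h
      exact h
    have hnle : (n:ℝ) ≤ (x + 1) / μm + 1 := by
      have h := Nat.ceil_lt_add_one (R := ℝ) (a := (x + 1) / μm) (by positivity)
      rw [hn] at h
      exact le_of_lt h
    have hInt := hWsqInt x hx n
    rw [← ofReal_integral_eq_lintegral_ofReal hInt (ae_of_all _ fun ω => sq_nonneg _)]
    apply ENNReal.ofReal_le_ofReal
    have hS : ∀ ω, x + ∑ i ∈ range n, Z (i + 1) ω ≤ ∑ i ∈ range n, (Z (i + 1) ω + μm) := by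
      intro ω
      rw [Finset.sum_add_distrib, Finset.sum_const, Finset.card_range, nsmul_eq_mul]
      linarith
    have hptw : ∀ ω, (walk Z x n ω + 1) ^ 2
        ≤ (2 * (∑ i ∈ range n, (Z (i + 1) ω + μm)) ^ 2 + 2) + (walk Z 0 n ω + 1) ^ 2 := by
      intro ω
      have hle := walk_le_max_free (Z := Z) hx n ω
      have h0 := walk_nonneg (Z := Z) hx n ω
      have hW0 := walk_nonneg (Z := Z) (le_refl (0:ℝ)) n ω
      have hST := hS ω
      set T := ∑ i ∈ range n, (Z (i + 1) ω + μm) with hTdef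
      set S := x + ∑ i ∈ range n, Z (i + 1) ω with hSdef
      rcases le_total (max S 0) (walk Z 0 n ω) with h | h
      · rw [max_eq_right h] at hle
        nlinarith [sq_nonneg T,
          mul_nonneg (sub_nonneg.2 hle) (by linarith : (0:ℝ) ≤ walk Z 0 n ω + walk Z x n ω + 2)]
      · rw [max_eq_left h] at hle
        rcases le_total S 0 with h2 | h2
        · rw [max_eq_right h2] at hle
          nlinarith [sq_nonneg T, sq_nonneg (walk Z 0 n ω + 1)]
        · rw [max_eq_left h2] at hle
          have hwT : walk Z x n ω ≤ T := le_trans hle hST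
          nlinarith [sq_nonneg (T - 1), sq_nonneg (walk Z 0 n ω + 1),
            mul_nonneg (sub_nonneg.2 hwT) (by linarith : (0:ℝ) ≤ T + walk Z x n ω + 2)]
    have hRint : Integrable (fun ω =>
        (2 * (∑ i ∈ range n, (Z (i + 1) ω + μm)) ^ 2 + 2) + (walk Z 0 n ω + 1) ^ 2) Pr :=
      (((hTsqInt n).const_mul 2).add (integrable_const 2)).add (hWsqInt 0 le_rfl n)
    have hmono : ∫ ω, (walk Z x n ω + 1) ^ 2 ∂Pr
        ≤ ∫ ω, ((2 * (∑ i ∈ range n, (Z (i + 1) ω + μm)) ^ 2 + 2)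
            + (walk Z 0 n ω + 1) ^ 2) ∂Pr :=
      integral_mono_of_nonneg (ae_of_all _ fun ω => sq_nonneg _) hRint (ae_of_all _ hptw)
    have hsplit : ∫ ω, ((2 * (∑ i ∈ range n, (Z (i + 1) ω + μm)) ^ 2 + 2)
            + (walk Z 0 n ω + 1) ^ 2) ∂Pr
        = (2 * ∫ ω, (∑ i ∈ range n, (Z (i + 1) ω + μm)) ^ 2 ∂Pr + 2)
            + ∫ ω, (walk Z 0 n ω + 1) ^ 2 ∂Pr := by
      have hCint : Integrable (fun ω =>
          2 * (∑ i ∈ range n, (Z (i + 1) ω + μm)) ^ 2 + 2) Pr :=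
        ((hTsqInt n).const_mul 2).add (integrable_const 2)
      rw [integral_add hCint (hWsqInt 0 le_rfl n),
        integral_add ((hTsqInt n).const_mul 2) (integrable_const 2), integral_const_mul,
        integral_const]
      simp
    have h6 := T_bound n
    have h7 := e_bound n
    have htotal : ∫ ω, (walk Z x n ω + 1) ^ 2 ∂Pr ≤ (n:ℝ) * A + 3 := by
      rw [hsplit] at hmono
      have hAr : (n:ℝ) * A + 3 = 2 * ((n:ℝ) * v) + 2 + (1 + (n:ℝ) * c) := by
        rw [hAdef]; ring
      rw [hAr]
      linarith
    have hKx : K / β < x + 1 := by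
      push_neg at hcase
      have h8 : (K / β) ^ 2 < (x + 1) ^ 2 := lt_of_le_of_lt (le_max_right _ _) hcase
      have hKβ : 0 ≤ K / β := by positivity
      nlinarith
    have hnA : (n:ℝ) * A + 3 ≤ K * (x + 1) := by
      have e1 : (x + 1) / μm * A = A / μm * (x + 1) := by ring
      have h9 : (n:ℝ) * A ≤ ((x + 1) / μm + 1) * A := by nlinarith
      have h10 : (1:ℝ) ≤ x + 1 := by linarith
      rw [hKdef]
      nlinarith
    have hfin : K * (x + 1) ≤ β * (x + 1) ^ 2 := by
      rw [div_lt_iff₀ hβ0] at hKx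
      nlinarith
    linarith
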